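/- Let t ↦ (x(t),y(t)) be a geodesic of the square metric defined on an interval [t₁,t₂], with x(t₁) = 0 = x(t₂), and suppose |y(t)| ≥ |x(t)| for every t ∈ [t₁,t₂]. Then x(t) = 0 for all t ∈ [t₁,t₂], i.e. the geodesic is (an arc of) the y-axis. -/

import Mathlib

open Set Filter Topology

private lemma prop_pos (f f' : ℝ → ℝ) {K s b : ℝ} (hK : 0 ≤ K) (hsb : s < b)
    (hf : ∀ t, HasDerivAt f (f' t) t)
    (hineq : ∀ t ∈ Ioo s b, 0 ≤ f t → -(K * f t) ≤ f' t)
    (hfs : 0 < f s) : 0 < f b := by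
  by_contra hb
  push_neg at hb
  have hdiff : Differentiable ℝ f := fun t => (hf t).differentiableAt
  have hcont : Continuous f := hdiff.continuous
  set S : Set ℝ := {t ∈ Icc s b | f t ≤ 0} with hS
  have hSne : S.Nonempty := ⟨b, ⟨hsb.le, le_rfl⟩, hb⟩
  have hSclosed : IsClosed S :=
    (isClosed_Icc.inter (isClosed_le hcont continuous_const) : IsClosed (Icc s b ∩ {t | f t ≤ 0}))
  have hSbdd : BddBelow S := ⟨s, fun t htS => htS.1.1⟩
  set c := sInf S with hc
  have hcS : c ∈ S := hSclosed.csInf_mem hSne hSbdd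
  have hcb : c ≤ b := hcS.1.2
  have hsc : s < c := by
    rcases eq_or_lt_of_le hcS.1.1 with h | h
    · exact absurd hcS.2 (by rw [← h]; linarith)
    · exact h
  have hpos : ∀ τ ∈ Ico s c, 0 < f τ := by
    intro τ hτ
    by_contra hle
    push_neg at hle
    have : τ ∈ S := ⟨⟨hτ.1, hτ.2.le.trans hcb⟩, hle⟩
    exact absurd (csInf_le hSbdd this) (not_le.mpr hτ.2)
  set h : ℝ → ℝ := fun τ => f τ * Real.exp (K * τ) with hhdef
  have hh : ∀ τ, HasDerivAt h ((f' τ + K * f τ) * Real.exp (K * τ)) τ := by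
    intro τ
    have he : HasDerivAt (fun τ : ℝ => Real.exp (K * τ)) (Real.exp (K * τ) * K) τ := by
      simpa using ((hasDerivAt_id τ).const_mul K).exp
    have := (hf τ).mul he
    exact this.congr_deriv (by ring)
  have hmono : MonotoneOn h (Icc s c) := by
    apply monotoneOn_of_deriv_nonneg (convex_Icc s c)
      ((hcont.mul (by continuity)).continuousOn)
      (fun τ _ => ((hh τ).differentiableAt).differentiableWithinAt)
    intro τ hτ
    rw [interior_Icc] at hτ
    rw [show (f * fun τ => Real.exp (K * τ)) = h from rfl, (hh τ).deriv]
    have hτb : τ ∈ Ioo s b := ⟨hτ.1, lt_of_lt_of_le hτ.2 hcb⟩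
    have hfτ : 0 ≤ f τ := (hpos τ ⟨hτ.1.le, hτ.2⟩).le
    have := hineq τ hτb hfτ
    have : 0 ≤ f' τ + K * f τ := by linarith
    positivity
  have h1 : h s ≤ h c := hmono ⟨le_rfl, hsc.le⟩ ⟨hsc.le, le_rfl⟩ hsc.le
  have h1' : f s * Real.exp (K * s) ≤ f c * Real.exp (K * c) := h1
  have he : 0 < Real.exp (K * c) := Real.exp_pos _
  have he2 : 0 < Real.exp (K * s) := Real.exp_pos _
  nlinarith [hcS.2, hfs]

private lemma prop_neg (f f' : ℝ → ℝ) {K a u : ℝ} (hK : 0 ≤ K) (hau : a < u)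
    (hf : ∀ t, HasDerivAt f (f' t) t)
    (hineq : ∀ t ∈ Ioo a u, f t ≤ 0 → K * f t ≤ f' t)
    (hfu : f u < 0) : f a < 0 := by
  by_contra ha
  push_neg at ha
  have hdiff : Differentiable ℝ f := fun t => (hf t).differentiableAt
  have hcont : Continuous f := hdiff.continuous
  set S : Set ℝ := {t ∈ Icc a u | 0 ≤ f t} with hS
  have hSne : S.Nonempty := ⟨a, ⟨le_rfl, hau.le⟩, ha⟩
  have hSclosed : IsClosed S :=
    (isClosed_Icc.inter (isClosed_le continuous_const hcont) : IsClosed (Icc a u ∩ {t | 0 ≤ f t}))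
  have hSbdd : BddAbove S := ⟨u, fun t htS => htS.1.2⟩
  set c := sSup S with hc
  have hcS : c ∈ S := hSclosed.csSup_mem hSne hSbdd
  have hac : a ≤ c := hcS.1.1
  have hcu : c < u := by
    rcases eq_or_lt_of_le hcS.1.2 with h | h
    · exact absurd hcS.2 (by rw [h]; linarith)
    · exact h
  have hneg : ∀ τ ∈ Ioc c u, f τ < 0 := by
    intro τ hτ
    by_contra hle
    push_neg at hle
    have : τ ∈ S := ⟨⟨hac.trans hτ.1.le, hτ.2⟩, hle⟩
    exact absurd (le_csSup hSbdd this) (not_le.mpr hτ.1)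
  set h : ℝ → ℝ := fun τ => f τ * Real.exp (-(K * τ)) with hhdef
  have hh : ∀ τ, HasDerivAt h ((f' τ - K * f τ) * Real.exp (-(K * τ))) τ := by
    intro τ
    have he : HasDerivAt (fun τ : ℝ => Real.exp (-(K * τ))) (Real.exp (-(K * τ)) * (-K)) τ := by
      simpa using (((hasDerivAt_id τ).const_mul K).neg).exp
    have := (hf τ).mul he
    exact this.congr_deriv (by ring)
  have hmono : MonotoneOn h (Icc c u) := by
    apply monotoneOn_of_deriv_nonneg (convex_Icc c u)
      ((hcont.mul (by continuity)).continuousOn)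
      (fun τ _ => ((hh τ).differentiableAt).differentiableWithinAt)
    intro τ hτ
    rw [interior_Icc] at hτ
    rw [show (f * fun τ => Real.exp (-(K * τ))) = h from rfl, (hh τ).deriv]
    have hτb : τ ∈ Ioo a u := ⟨lt_of_le_of_lt hac hτ.1, hτ.2⟩
    have hfτ : f τ ≤ 0 := (hneg τ ⟨hτ.1, hτ.2.le⟩).le
    have := hineq τ hτb hfτ
    have : 0 ≤ f' τ - K * f τ := by linarith
    positivity
  have h1 : h c ≤ h u := hmono ⟨le_rfl, hcu.le⟩ ⟨hcu.le, le_rfl⟩ hcu.le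
  have h1' : f c * Real.exp (-(K * c)) ≤ f u * Real.exp (-(K * u)) := h1
  have he : 0 < Real.exp (-(K * c)) := Real.exp_pos _
  have he2 : 0 < Real.exp (-(K * u)) := Real.exp_pos _
  nlinarith [hcS.2, hfu]


set_option maxHeartbeats 1000000 in
private lemma geo_key (x y : ℝ → ℝ) (t₁ t₂ : ℝ)
    (hx : ContDiff ℝ 2 x) (hy : ContDiff ℝ 2 y)
    (hsq : ∀ t ∈ Set.Icc t₁ t₂, |x t| < 1 ∧ |y t| < 1)
    (hgeo₁ : ∀ t ∈ Set.Icc t₁ t₂,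
      deriv (deriv x) t =
        2 * y t / (1 - (y t) ^ 2) * deriv x t * deriv y t
          - x t / (1 - (y t) ^ 2) * (deriv y t) ^ 2)
    (hgeo₂ : ∀ t ∈ Set.Icc t₁ t₂,
      deriv (deriv y) t =
        -(y t) / (1 - (x t) ^ 2) * (deriv x t) ^ 2
          + 2 * x t / (1 - (x t) ^ 2) * deriv x t * deriv y t)
    (hend₁ : x t₁ = 0) (hend₂ : x t₂ = 0)
    (hreg : ∀ t ∈ Set.Icc t₁ t₂, |x t| ≤ |y t|)
    (s₀ : ℝ) (hs₀ : s₀ ∈ Set.Icc t₁ t₂) (hxs : 0 < x s₀) (hys : 0 < y s₀) : False := by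
  -- differentiability facts
  have hxd : Differentiable ℝ x := hx.differentiable (by norm_num)
  have hyd : Differentiable ℝ y := hy.differentiable (by norm_num)
  have hxd2 : Differentiable ℝ (deriv x) := by
    have h : ContDiff ℝ ((1:ℕ∞)+1) x := by exact_mod_cast hx
    rw [contDiff_succ_iff_deriv] at h
    exact h.2.2.differentiable (by norm_num)
  have hyd2 : Differentiable ℝ (deriv y) := by
    have h : ContDiff ℝ ((1:ℕ∞)+1) y := by exact_mod_cast hy
    rw [contDiff_succ_iff_deriv] at h
    exact h.2.2.differentiable (by norm_num)
  -- s₀ is in the open interval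
  have hs₁ : t₁ < s₀ := by
    rcases eq_or_lt_of_le hs₀.1 with h | h
    · exact absurd hxs (by rw [← h, hend₁]; exact lt_irrefl 0)
    · exact h
  have hs₂ : s₀ < t₂ := by
    rcases eq_or_lt_of_le hs₀.2 with h | h
    · exact absurd hxs (by rw [h, hend₂]; exact lt_irrefl 0)
    · exact h
  -- bump extraction
  have hSa : IsCompact {t ∈ Icc t₁ s₀ | x t = 0} :=
    isCompact_Icc.inter_right (isClosed_eq hxd.continuous continuous_const)
  have hSane : {t ∈ Icc t₁ s₀ | x t = 0}.Nonempty := ⟨t₁, ⟨le_rfl, hs₁.le⟩, hend₁⟩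
  set a := sSup {t ∈ Icc t₁ s₀ | x t = 0} with hadef
  have haS : a ∈ {t ∈ Icc t₁ s₀ | x t = 0} := hSa.sSup_mem hSane
  have hax : x a = 0 := haS.2
  have ha1 : t₁ ≤ a := haS.1.1
  have ha2 : a < s₀ := by
    rcases eq_or_lt_of_le haS.1.2 with h | h
    · exact absurd hxs (by rw [← h, hax]; exact lt_irrefl 0)
    · exact h
  have hSb : IsCompact {t ∈ Icc s₀ t₂ | x t = 0} :=
    isCompact_Icc.inter_right (isClosed_eq hxd.continuous continuous_const)
  have hSbne : {t ∈ Icc s₀ t₂ | x t = 0}.Nonempty := ⟨t₂, ⟨hs₂.le, le_rfl⟩, hend₂⟩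
  set b := sInf {t ∈ Icc s₀ t₂ | x t = 0} with hbdef
  have hbS : b ∈ {t ∈ Icc s₀ t₂ | x t = 0} := hSb.sInf_mem hSbne
  have hbx : x b = 0 := hbS.2
  have hb2 : b ≤ t₂ := hbS.1.2
  have hb1 : s₀ < b := by
    rcases eq_or_lt_of_le hbS.1.1 with h | h
    · exact absurd hxs (by rw [h, hbx]; exact lt_irrefl 0)
    · exact h
  have hab : a < b := ha2.trans hb1
  have hIcc : Icc a b ⊆ Icc t₁ t₂ := Icc_subset_Icc ha1 hb2
  have hs₀ab : s₀ ∈ Ioo a b := ⟨ha2, hb1⟩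
  -- x > 0 on (a, b)
  have hxposL : ∀ t, a < t → t ≤ s₀ → 0 < x t := by
    intro t hat hts
    by_contra hle
    push_neg at hle
    obtain ⟨z, hz, hz0⟩ := intermediate_value_Icc hts (hxd.continuous.continuousOn)
      (⟨hle, hxs.le⟩ : (0:ℝ) ∈ Icc (x t) (x s₀))
    have hzS : z ∈ {t ∈ Icc t₁ s₀ | x t = 0} :=
      ⟨⟨ha1.trans (hat.le.trans hz.1), hz.2⟩, hz0⟩
    have hza := le_csSup hSa.bddAbove hzS
    rw [← hadef] at hza
    linarith [hz.1]
  have hxposR : ∀ t, s₀ ≤ t → t < b → 0 < x t := by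
    intro t hst htb
    by_contra hle
    push_neg at hle
    obtain ⟨z, hz, hz0⟩ := intermediate_value_Icc' hst (hxd.continuous.continuousOn)
      (⟨hle, hxs.le⟩ : (0:ℝ) ∈ Icc (x t) (x s₀))
    have hzS : z ∈ {t ∈ Icc s₀ t₂ | x t = 0} :=
      ⟨⟨hz.1, (hz.2.trans htb.le).trans hb2⟩, hz0⟩
    have hzb := csInf_le hSb.bddBelow hzS
    rw [← hbdef] at hzb
    linarith [hz.2]
  have hxpos : ∀ t ∈ Ioo a b, 0 < x t := by
    intro t htab
    rcases le_or_gt t s₀ with h | h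
    · exact hxposL t htab.1 h
    · exact hxposR t h.le htab.2
  -- y > 0 on (a, b)
  have hyne : ∀ t ∈ Ioo a b, y t ≠ 0 := by
    intro t htab h0
    have := hreg t (hIcc ⟨htab.1.le, htab.2.le⟩)
    rw [h0] at this
    simp only [abs_zero] at this
    exact absurd this (not_le.mpr (by rw [abs_pos]; exact (hxpos t htab).ne'))
  have hypos : ∀ t ∈ Ioo a b, 0 < y t := by
    intro t htab
    rcases lt_or_gt_of_ne (hyne t htab) with hneg | hpos
    · exfalso
      rcases le_total t s₀ with h | h
      · obtain ⟨z, hz, hz0⟩ := intermediate_value_Icc h (hyd.continuous.continuousOn)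
          (⟨hneg.le, hys.le⟩ : (0:ℝ) ∈ Icc (y t) (y s₀))
        exact hyne z ⟨htab.1.trans_le hz.1, lt_of_le_of_lt hz.2 hb1⟩ hz0
      · obtain ⟨z, hz, hz0⟩ := intermediate_value_Icc' h (hyd.continuous.continuousOn)
          (⟨hneg.le, hys.le⟩ : (0:ℝ) ∈ Icc (y t) (y s₀))
        exact hyne z ⟨lt_of_lt_of_le ha2 hz.1, lt_of_le_of_lt hz.2 htab.2⟩ hz0
    · exact hpos
  -- basic bounds on (a,b)
  have hbnd : ∀ t ∈ Ioo a b, 0 < x t ∧ x t ≤ y t ∧ y t < 1 ∧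
      0 < 1 - x t ^ 2 ∧ 0 < 1 - y t ^ 2 := by
    intro t htab
    have ht' : t ∈ Icc t₁ t₂ := hIcc ⟨htab.1.le, htab.2.le⟩
    have h1 := (hsq t ht').1
    have h2 := (hsq t ht').2
    have h3 := hreg t ht'
    have hxp := hxpos t htab
    have hyp := hypos t htab
    rw [abs_of_pos hxp] at h1 h3
    rw [abs_of_pos hyp] at h2 h3
    refine ⟨hxp, h3, h2, by nlinarith, by nlinarith⟩
  -- the function J and its derivative
  set J : ℝ → ℝ := fun t => deriv x t * y t - x t * deriv y t with hJdef
  set Jd : ℝ → ℝ := fun t => deriv (deriv x) t * y t - x t * deriv (deriv y) t with hJddef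
  have hJd : ∀ t, HasDerivAt J (Jd t) t := by
    intro t
    have h1 : HasDerivAt (fun t => deriv x t * y t)
        (deriv (deriv x) t * y t + deriv x t * deriv y t) t :=
      ((hxd2 t).hasDerivAt).mul ((hyd t).hasDerivAt)
    have h2 : HasDerivAt (fun t => x t * deriv y t)
        (deriv x t * deriv y t + x t * deriv (deriv y) t) t :=
      ((hxd t).hasDerivAt).mul ((hyd2 t).hasDerivAt)
    have := h1.sub h2
    exact this.congr_deriv (by simp only [hJddef]; ring)
  -- bound on the coefficient
  set Ab : ℝ → ℝ := fun t => 2 * y t * deriv y t / (1 - y t ^ 2) with hAbdef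
  have hAbcont : ContinuousOn Ab (Icc t₁ t₂) := by
    apply ContinuousOn.div
    · exact (continuous_const.mul hyd.continuous).mul (hy.continuous_deriv (by norm_num)) |>.continuousOn
    · exact (continuous_const.sub (hyd.continuous.pow 2)).continuousOn
    · intro t ht
      have := (hsq t ht).2
      have h2 : y t ^ 2 < 1 := by nlinarith [abs_nonneg (y t), sq_abs (y t)]
      nlinarith
  obtain ⟨K₀, hK₀⟩ := isCompact_Icc.exists_bound_of_continuousOn hAbcont
  set K := max K₀ 0 with hKdef
  have hK : 0 ≤ K := le_max_right _ _
  have hKb : ∀ t ∈ Icc t₁ t₂, |Ab t| ≤ K := fun t ht =>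
    le_trans (hK₀ t ht) (le_max_left _ _)
  -- the auxiliary quantity C
  set C : ℝ → ℝ := fun t => y t ^ 2 * deriv y t ^ 2 / (1 - y t ^ 2)
      - x t ^ 2 * deriv y t ^ 2 / (1 - x t ^ 2) + J t ^ 2 / (1 - x t ^ 2) with hCdef
  -- the key identity
  have hkey : ∀ t ∈ Ioo a b, Jd t = Ab t * J t + (x t / y t) * C t := by
    intro t htab
    have ht' : t ∈ Icc t₁ t₂ := hIcc ⟨htab.1.le, htab.2.le⟩
    obtain ⟨hxp, hxy, hy1, hx2, hy2⟩ := hbnd t htab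
    have hyne' : y t ≠ 0 := (hypos t htab).ne'
    have hx2' : (1 : ℝ) - x t ^ 2 ≠ 0 := hx2.ne'
    have hy2' : (1 : ℝ) - y t ^ 2 ≠ 0 := hy2.ne'
    simp only [hJddef, hJdef, hAbdef, hCdef]
    rw [hgeo₁ t ht', hgeo₂ t ht']
    field_simp
    ring
  -- C is nonnegative on (a,b)
  have hCpos : ∀ t ∈ Ioo a b, 0 ≤ C t := by
    intro t htab
    obtain ⟨hxp, hxy, hy1, hx2, hy2⟩ := hbnd t htab
    have h1 : x t ^ 2 * deriv y t ^ 2 / (1 - x t ^ 2)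
        ≤ y t ^ 2 * deriv y t ^ 2 / (1 - y t ^ 2) := by
      rw [div_le_div_iff₀ hx2 hy2]
      have hsq' : x t ^ 2 ≤ y t ^ 2 := by nlinarith
      nlinarith [mul_nonneg (sub_nonneg.mpr hsq') (sq_nonneg (deriv y t))]
    have h2 : 0 ≤ J t ^ 2 / (1 - x t ^ 2) := div_nonneg (sq_nonneg _) hx2.le
    simp only [hCdef]
    linarith
  -- neighborhood filters at the endpoints
  have hNeBotA : (𝓝[Ioo a b] a).NeBot := by
    apply mem_closure_iff_nhdsWithin_neBot.mp
    rw [closure_Ioo hab.ne]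
    exact ⟨le_rfl, hab.le⟩
  have hNeBotB : (𝓝[Ioo a b] b).NeBot := by
    apply mem_closure_iff_nhdsWithin_neBot.mp
    rw [closure_Ioo hab.ne]
    exact ⟨hab.le, le_rfl⟩
  -- endpoint sign facts
  have hya : 0 ≤ y a := by
    have h1 : Tendsto y (𝓝[Ioo a b] a) (𝓝 (y a)) := hyd.continuous.continuousWithinAt
    exact ge_of_tendsto h1 (eventually_mem_nhdsWithin.mono (fun τ hτ => (hypos τ hτ).le))
  have hyb : 0 ≤ y b := by
    have h1 : Tendsto y (𝓝[Ioo a b] b) (𝓝 (y b)) := hyd.continuous.continuousWithinAt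
    exact ge_of_tendsto h1 (eventually_mem_nhdsWithin.mono (fun τ hτ => (hypos τ hτ).le))
  have hdxa : 0 ≤ deriv x a := by
    have hs1 := hasDerivAt_iff_tendsto_slope.mp ((hxd a).hasDerivAt)
    have hs2 : Tendsto (slope x a) (𝓝[Ioo a b] a) (𝓝 (deriv x a)) :=
      hs1.mono_left (nhdsWithin_mono a (fun τ hτ => hτ.1.ne'))
    apply ge_of_tendsto hs2
    apply eventually_mem_nhdsWithin.mono
    intro τ hτ
    rw [slope_def_field, hax, sub_zero]
    have h1 := hxpos τ hτ
    have h2 : 0 < τ - a := by linarith [hτ.1]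
    positivity
  have hdxb : deriv x b ≤ 0 := by
    have hs1 := hasDerivAt_iff_tendsto_slope.mp ((hxd b).hasDerivAt)
    have hs2 : Tendsto (slope x b) (𝓝[Ioo a b] b) (𝓝 (deriv x b)) :=
      hs1.mono_left (nhdsWithin_mono b (fun τ hτ => hτ.2.ne))
    apply le_of_tendsto hs2
    apply eventually_mem_nhdsWithin.mono
    intro τ hτ
    rw [slope_def_field, hbx, sub_zero]
    have h1 := hxpos τ hτ
    have h2 : τ - b < 0 := by linarith [hτ.2]
    exact div_nonpos_of_nonneg_of_nonpos h1.le h2.le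
  have hJa : 0 ≤ J a := by
    simp only [hJdef, hax]
    calc (0:ℝ) ≤ deriv x a * y a := mul_nonneg hdxa hya
    _ = deriv x a * y a - 0 * deriv y a := by ring
  have hJb : J b ≤ 0 := by
    simp only [hJdef, hbx]
    calc deriv x b * y b - 0 * deriv y b = deriv x b * y b := by ring
    _ ≤ 0 := mul_nonpos_iff.mpr (Or.inr ⟨hdxb, hyb⟩)
  -- Case 1 : J is somewhere positive on (a,b)
  by_cases hP : ∃ s ∈ Ioo a b, 0 < J s
  · obtain ⟨s, hsab, hJs⟩ := hP
    have hprop : 0 < J b := by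
      apply prop_pos J Jd hK hsab.2 hJd _ hJs
      intro t htsb hJt
      have htab : t ∈ Ioo a b := ⟨hsab.1.trans htsb.1, htsb.2⟩
      have ht' : t ∈ Icc t₁ t₂ := hIcc ⟨htab.1.le, htab.2.le⟩
      rw [hkey t htab]
      have hA := abs_le.mp (hKb t ht')
      have h1 : -(K * J t) ≤ Ab t * J t := by nlinarith [hA.1, hA.2]
      have h2 : 0 ≤ x t / y t * C t :=
        mul_nonneg (div_nonneg (hxpos t htab).le (hypos t htab).le) (hCpos t htab)
      exact le_trans h1 (le_add_of_nonneg_right h2)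
    linarith
  by_cases hN : ∃ s ∈ Ioo a b, J s < 0
  · obtain ⟨s, hsab, hJs⟩ := hN
    have hprop : J a < 0 := by
      apply prop_neg J Jd hK hsab.1 hJd _ hJs
      intro t htas hJt
      have htab : t ∈ Ioo a b := ⟨htas.1, htas.2.trans hsab.2⟩
      have ht' : t ∈ Icc t₁ t₂ := hIcc ⟨htab.1.le, htab.2.le⟩
      rw [hkey t htab]
      have hA := abs_le.mp (hKb t ht')
      have h1 : K * J t ≤ Ab t * J t := by nlinarith [hA.1, hA.2]
      have h2 : 0 ≤ x t / y t * C t :=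
        mul_nonneg (div_nonneg (hxpos t htab).le (hypos t htab).le) (hCpos t htab)
      exact le_trans h1 (le_add_of_nonneg_right h2)
    linarith
  -- Case 3 : J vanishes identically on (a,b)
  push_neg at hP hN
  have hJ0 : ∀ t ∈ Ioo a b, J t = 0 :=
    fun t ht => le_antisymm (hP t ht) (hN t ht)
  have hJd0 : ∀ t ∈ Ioo a b, Jd t = 0 := by
    intro t htab
    have hev : J =ᶠ[𝓝 t] (fun _ => (0:ℝ)) :=
      Filter.eventually_of_mem (isOpen_Ioo.mem_nhds htab) (fun τ hτ => hJ0 τ hτ)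
    have h1 : deriv J t = deriv (fun _ : ℝ => (0:ℝ)) t := hev.deriv_eq
    rw [deriv_const] at h1
    rw [← (hJd t).deriv]
    exact h1
  have hC0 : ∀ t ∈ Ioo a b, C t = 0 := by
    intro t htab
    have h := hkey t htab
    rw [hJ0 t htab, hJd0 t htab, mul_zero, zero_add] at h
    have hxy0 : x t / y t ≠ 0 :=
      div_ne_zero (hxpos t htab).ne' (hypos t htab).ne'
    rcases mul_eq_zero.mp h.symm with h' | h'
    · exact absurd h' hxy0
    · exact h'
  -- hence at each point either y' = 0 or y = x
  have hyx : ∀ t ∈ Ioo a b, deriv y t = 0 ∨ y t = x t := by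
    intro t htab
    obtain ⟨hxp, hxy, hy1, hx2, hy2⟩ := hbnd t htab
    have hC := hC0 t htab
    simp only [hCdef] at hC
    rw [hJ0 t htab] at hC
    have hfact : deriv y t ^ 2 * (y t ^ 2 - x t ^ 2) = 0 := by
      have h' : y t ^ 2 * deriv y t ^ 2 * (1 - x t ^ 2)
          = x t ^ 2 * deriv y t ^ 2 * (1 - y t ^ 2) := by
        field_simp [hx2.ne', hy2.ne'] at hC
        linarith
      nlinarith [h']
    rcases mul_eq_zero.mp hfact with h' | h'
    · left; exact pow_eq_zero_iff (n := 2) (by norm_num) |>.mp h'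
    · right
      have h'' : (y t - x t) * (y t + x t) = 0 := by nlinarith [h']
      rcases mul_eq_zero.mp h'' with h3 | h3
      · linarith
      · exfalso; nlinarith
  -- derivative of y² - x² vanishes on (a,b)
  have hyd2' : ∀ t ∈ Ioo a b, deriv (fun τ => y τ ^ 2 - x τ ^ 2) t = 0 := by
    intro t htab
    have hD : HasDerivAt (fun τ => y τ ^ 2 - x τ ^ 2)
        (2 * y t * deriv y t - 2 * x t * deriv x t) t := by
      have h1 := ((hyd t).hasDerivAt.pow 2).sub ((hxd t).hasDerivAt.pow 2)
      exact h1.congr_deriv (by norm_num)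
    rw [hD.deriv]
    rcases hyx t htab with h' | h'
    · have hJt := hJ0 t htab
      simp only [hJdef] at hJt
      rw [h'] at hJt ⊢
      have hdx0 : deriv x t = 0 := by
        have hyne' := (hypos t htab).ne'
        rcases mul_eq_zero.mp (by linarith [hJt] : deriv x t * y t = 0) with h3 | h3
        · exact h3
        · exact absurd h3 hyne'
      rw [hdx0]; ring
    · have hmin : IsLocalMin (fun τ => y τ ^ 2 - x τ ^ 2) t := by
        apply Filter.eventually_of_mem (isOpen_Ioo.mem_nhds htab)
        intro τ hτ
        obtain ⟨hxp', hxy', _, _, _⟩ := hbnd τ hτ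
        simp only
        rw [h']
        nlinarith
      have := hmin.deriv_eq_zero
      have hDD : HasDerivAt (fun τ => y τ ^ 2 - x τ ^ 2)
          (2 * y t * deriv y t - 2 * x t * deriv x t) t := hD
      rw [hDD.deriv] at this
      linarith [this]
  -- constancy helper
  have hmvt : ∀ f : ℝ → ℝ, Differentiable ℝ f → (∀ t ∈ Ioo a b, deriv f t = 0) →
      ∀ t ∈ Ioo a b, f t = f s₀ := by
    intro f hfd hf0 t htab
    rcases lt_trichotomy t s₀ with h | h | h
    · obtain ⟨c, hc, hceq⟩ := exists_hasDerivAt_eq_slope f (deriv f) h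
        (hfd.continuous.continuousOn) (fun τ _ => (hfd τ).hasDerivAt)
      have hc0 := hf0 c ⟨htab.1.trans hc.1, hc.2.trans hb1⟩
      rw [hc0] at hceq
      have := hceq.symm
      rw [div_eq_zero_iff] at this
      rcases this with h3 | h3
      · linarith
      · linarith
    · rw [h]
    · obtain ⟨c, hc, hceq⟩ := exists_hasDerivAt_eq_slope f (deriv f) h
        (hfd.continuous.continuousOn) (fun τ _ => (hfd τ).hasDerivAt)
      have hc0 := hf0 c ⟨ha2.trans hc.1, hc.2.trans htab.2⟩
      rw [hc0] at hceq
      have := hceq.symm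
      rw [div_eq_zero_iff] at this
      rcases this with h3 | h3
      · linarith
      · linarith
  -- the final contradiction from x being constant on (a,b)
  have hconst_contra : (∀ t ∈ Ioo a b, deriv x t = 0) → False := by
    intro hder0
    have hxconst := hmvt x hxd hder0
    have h1 : Tendsto x (𝓝[Ioo a b] a) (𝓝 (x a)) := hxd.continuous.continuousWithinAt
    have hev : x =ᶠ[𝓝[Ioo a b] a] (fun _ => x s₀) :=
      eventually_mem_nhdsWithin.mono (fun τ hτ => hxconst τ hτ)
    have h2 : Tendsto x (𝓝[Ioo a b] a) (𝓝 (x s₀)) :=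
      tendsto_const_nhds.congr' hev.symm
    have := tendsto_nhds_unique h1 h2
    rw [hax] at this
    exact absurd this.symm hxs.ne'
  -- constancy of y² - x²
  have hhconst := hmvt (fun τ => y τ ^ 2 - x τ ^ 2)
    ((hyd.pow 2).sub (hxd.pow 2)) hyd2'
  by_cases hdiag : y s₀ = x s₀
  · -- the diagonal case
    have hyx2 : ∀ t ∈ Ioo a b, y t = x t := by
      intro t htab
      obtain ⟨hxp, hxy, _, _, _⟩ := hbnd t htab
      have := hhconst t htab
      rw [hdiag] at this
      have h0 : y t ^ 2 - x t ^ 2 = 0 := by linarith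
      nlinarith
    have hdd : ∀ t ∈ Ioo a b, deriv y t = deriv x t := by
      intro t htab
      have hev : y =ᶠ[𝓝 t] x :=
        Filter.eventually_of_mem (isOpen_Ioo.mem_nhds htab) (fun τ hτ => hyx2 τ hτ)
      exact hev.deriv_eq
    have hxx : ∀ t ∈ Ioo a b, deriv (deriv x) t = x t * (deriv x t) ^ 2 / (1 - x t ^ 2) := by
      intro t htab
      obtain ⟨hxp, hxy, hy1, hx2, hy2⟩ := hbnd t htab
      rw [hgeo₁ t (hIcc ⟨htab.1.le, htab.2.le⟩), hyx2 t htab, hdd t htab]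
      field_simp
      ring
    set e : ℝ → ℝ := fun τ => (1 - x τ ^ 2) * (deriv x τ) ^ 2 with hedef
    have hediff : Differentiable ℝ e :=
      ((differentiable_const _).sub (hxd.pow 2)).mul (hxd2.pow 2)
    have hed : ∀ t ∈ Ioo a b, deriv e t = 0 := by
      intro t htab
      obtain ⟨hxp, hxy, hy1, hx2, hy2⟩ := hbnd t htab
      have h1 : HasDerivAt e ((-(2 * x t * deriv x t)) * (deriv x t) ^ 2
          + (1 - x t ^ 2) * (2 * deriv x t * deriv (deriv x) t)) t := by
        have h2 := ((hasDerivAt_const t (1:ℝ)).sub ((hxd t).hasDerivAt.pow 2)).mul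
          ((hxd2 t).hasDerivAt.pow 2)
        exact h2.congr_deriv (by norm_num)
      rw [h1.deriv, hxx t htab]
      field_simp
      ring
    obtain ⟨t₀, ht₀mem, ht₀max⟩ := isCompact_Icc.exists_isMaxOn
      (nonempty_Icc.mpr hab.le) (hxd.continuous.continuousOn)
    have ht₀pos : 0 < x t₀ := lt_of_lt_of_le hxs (ht₀max ⟨ha2.le, hb1.le⟩)
    have ht₀ab : t₀ ∈ Ioo a b := by
      rcases eq_or_lt_of_le ht₀mem.1 with h | h
      · exact absurd ht₀pos (by rw [← h, hax]; exact lt_irrefl 0)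
      rcases eq_or_lt_of_le ht₀mem.2 with h2 | h2
      · exact absurd ht₀pos (by rw [h2, hbx]; exact lt_irrefl 0)
      exact ⟨h, h2⟩
    have hd0 : deriv x t₀ = 0 := by
      have hloc : IsLocalMax x t₀ :=
        Filter.eventually_of_mem (isOpen_Ioo.mem_nhds ht₀ab)
          (fun τ hτ => ht₀max (Ioo_subset_Icc_self hτ))
      exact hloc.deriv_eq_zero
    have he0 : e t₀ = 0 := by simp only [hedef, hd0]; ring
    have heconst := hmvt e hediff hed
    apply hconst_contra
    intro t htab
    obtain ⟨hxp, hxy, hy1, hx2, hy2⟩ := hbnd t htab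
    have h1 : e t = 0 := by
      rw [heconst t htab, ← heconst t₀ ht₀ab, he0]
    simp only [hedef] at h1
    rcases mul_eq_zero.mp h1 with h' | h'
    · exact absurd h' hx2.ne'
    · exact pow_eq_zero_iff (n := 2) (by norm_num) |>.mp h'
  · -- the off-diagonal case
    have hd : 0 < y s₀ ^ 2 - x s₀ ^ 2 := by
      obtain ⟨hxp, hxy, _, _, _⟩ := hbnd s₀ hs₀ab
      have : x s₀ < y s₀ := lt_of_le_of_ne hxy (fun h => hdiag h.symm)
      nlinarith
    apply hconst_contra
    intro t htab
    rcases hyx t htab with h' | h'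
    · have hJt := hJ0 t htab
      simp only [hJdef] at hJt
      rw [h', mul_zero, sub_zero] at hJt
      rcases mul_eq_zero.mp hJt with h3 | h3
      · exact h3
      · exact absurd h3 (hypos t htab).ne'
    · exfalso
      have := hhconst t htab
      rw [h'] at this
      nlinarith

private lemma geo_key2 (x y : ℝ → ℝ) (t₁ t₂ : ℝ)
    (hx : ContDiff ℝ 2 x) (hy : ContDiff ℝ 2 y)
    (hsq : ∀ t ∈ Set.Icc t₁ t₂, |x t| < 1 ∧ |y t| < 1)
    (hgeo₁ : ∀ t ∈ Set.Icc t₁ t₂,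
      deriv (deriv x) t =
        2 * y t / (1 - (y t) ^ 2) * deriv x t * deriv y t
          - x t / (1 - (y t) ^ 2) * (deriv y t) ^ 2)
    (hgeo₂ : ∀ t ∈ Set.Icc t₁ t₂,
      deriv (deriv y) t =
        -(y t) / (1 - (x t) ^ 2) * (deriv x t) ^ 2
          + 2 * x t / (1 - (x t) ^ 2) * deriv x t * deriv y t)
    (hend₁ : x t₁ = 0) (hend₂ : x t₂ = 0)
    (hreg : ∀ t ∈ Set.Icc t₁ t₂, |x t| ≤ |y t|)
    (s₀ : ℝ) (hs₀ : s₀ ∈ Set.Icc t₁ t₂) (hxs : 0 < x s₀) : False := by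
  have hneg2 : ∀ f : ℝ → ℝ, ∀ s : ℝ, deriv (deriv (fun u => -(f u))) s
      = -(deriv (deriv f) s) := by
    intro f s
    have h1 : (deriv fun u => -(f u)) = fun u => -(deriv f u) :=
      funext (fun u => deriv.neg)
    rw [h1, deriv.fun_neg]
  have hyne : y s₀ ≠ 0 := by
    intro h0
    have := hreg s₀ hs₀
    rw [h0, abs_zero] at this
    exact absurd (abs_eq_zero.mp (le_antisymm this (abs_nonneg _))) hxs.ne'
  rcases lt_or_gt_of_ne hyne with hys | hys
  · -- y s₀ < 0 : flip y
    apply geo_key x (fun u => -(y u)) t₁ t₂ hx hy.neg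
      (fun t ht => by rw [abs_neg]; exact hsq t ht)
      (fun t ht => by
        simp only [deriv.fun_neg]
        rw [hgeo₁ t ht]
        ring)
      (fun t ht => by
        rw [hneg2, hgeo₂ t ht]
        simp only [deriv.fun_neg]
        ring)
      hend₁ hend₂
      (fun t ht => by rw [abs_neg]; exact hreg t ht)
      s₀ hs₀ hxs
    simpa using hys
  · exact geo_key x y t₁ t₂ hx hy hsq hgeo₁ hgeo₂ hend₁ hend₂ hreg s₀ hs₀ hxs hys

set_option maxHeartbeats 1000000 in
/-- A geodesic of the metric `ds² = (1−y²)dx² + (1−x²)dy²` on the open square that meets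
the `y`-axis twice while remaining in the region `|y| ≥ |x|` must be (an arc of) the
`y`-axis. -/
theorem geodesic_meeting_axis_twice_is_axis
    (x y : ℝ → ℝ) (t₁ t₂ : ℝ) (ht : t₁ < t₂)
    (hx : ContDiff ℝ 2 x) (hy : ContDiff ℝ 2 y)
    (hsq : ∀ t ∈ Set.Icc t₁ t₂, |x t| < 1 ∧ |y t| < 1)
    (hgeo₁ : ∀ t ∈ Set.Icc t₁ t₂,
      deriv (deriv x) t =
        2 * y t / (1 - (y t) ^ 2) * deriv x t * deriv y t
          - x t / (1 - (y t) ^ 2) * (deriv y t) ^ 2)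
    (hgeo₂ : ∀ t ∈ Set.Icc t₁ t₂,
      deriv (deriv y) t =
        -(y t) / (1 - (x t) ^ 2) * (deriv x t) ^ 2
          + 2 * x t / (1 - (x t) ^ 2) * deriv x t * deriv y t)
    (hend₁ : x t₁ = 0) (hend₂ : x t₂ = 0)
    (hreg : ∀ t ∈ Set.Icc t₁ t₂, |x t| ≤ |y t|) :
    ∀ t ∈ Set.Icc t₁ t₂, x t = 0 := by
  intro t htmem
  by_contra hxt
  have hneg2 : ∀ f : ℝ → ℝ, ∀ s : ℝ, deriv (deriv (fun u => -(f u))) s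
      = -(deriv (deriv f) s) := by
    intro f s
    have h1 : (deriv fun u => -(f u)) = fun u => -(deriv f u) :=
      funext (fun u => deriv.neg)
    rw [h1, deriv.fun_neg]
  rcases lt_or_gt_of_ne hxt with hxs | hxs
  · -- x t < 0 : flip x
    apply geo_key2 (fun u => -(x u)) y t₁ t₂ hx.neg hy
      (fun s hs => by rw [abs_neg]; exact hsq s hs)
      (fun s hs => by
        rw [hneg2, hgeo₁ s hs]
        simp only [deriv.fun_neg]
        ring)
      (fun s hs => by
        simp only [deriv.fun_neg]
        rw [hgeo₂ s hs]
        ring)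
      (by simp only [hend₁, neg_zero]) (by simp only [hend₂, neg_zero])
      (fun s hs => by rw [abs_neg]; exact hreg s hs)
      t htmem
    simpa using hxs
  · exact geo_key2 x y t₁ t₂ hx hy hsq hgeo₁ hgeo₂ hend₁ hend₂ hreg t htmem hxs
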